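/- For every positive integer N, one has the equality of rational numbers W_N(2, −1) = 4^N · binom(3N/2, N), where binom(3N/2, N) := (1/N!) · Π_{j=0}^{N−1} (3N/2 − j) is the generalized binomial coefficient. -/
import Mathlib


/-- The binary form `W_N(X, Y) = Σ_{m=0}^{N} C(2N−m, N−m) · C(N+m, m) · X^{N−m} · (−Y)^m`. -/
noncomputable def W {R : Type*} [CommRing R] (N : ℕ) (X Y : R) : R :=
  ∑ m ∈ Finset.range (N + 1),
    ((2 * N - m).choose (N - m) : R) * ((N + m).choose m : R) * X ^ (N - m) * (-Y) ^ m

namespace WAux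

/-- The summand of `W N 2 (-1)`. -/
def Fq (N m : ℕ) : ℚ :=
  ((2 * N - m).choose (N - m) : ℚ) * ((N + m).choose m : ℚ) * 2 ^ (N - m)

/-- Zeilberger certificate polynomial. -/
def qp (N m : ℚ) : ℚ :=
  -(48+232*N+414*N^2+349*N^3+141*N^4+22*N^5)
  + m*(74+246*N+300*N^2+159*N^3+31*N^4)
  + m^2*(-27-60*N-42*N^2-10*N^3)
  + m^3*(-1-6*N-4*N^2)
  + m^4*(3+4*N) - m^5

/-- The telescoping certificate. -/
noncomputable def Gq (N m : ℕ) : ℚ :=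
  8 * m * qp N m * Fq N m / ((N + 1) * ((N : ℚ) + 1 - m) * ((N : ℚ) + 2 - m))

set_option maxHeartbeats 2000000 in
lemma cert (N m : ℕ) (h : m < N) :
    ((N:ℚ)+1)*((N:ℚ)+2)^2 * Fq (N+2) m
      = 4*(3*(N:ℚ)+2)*(3*(N:ℚ)+4)*(3*(N:ℚ)+6) * Fq N m + (Gq N (m+1) - Gq N m) := by
  obtain ⟨d, rfl⟩ : ∃ d, N = m + d + 1 := ⟨N - m - 1, by omega⟩
  -- unfold the three F values
  have hF2 : Fq (m+d+1+2) m
      = ((m+2*d+6).choose (d+3) : ℚ) * ((2*m+d+3).choose m : ℚ) * 2^(d+3) := by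
    unfold Fq
    rw [show 2*(m+d+1+2) - m = m+2*d+6 by omega, show (m+d+1+2) - m = d+3 by omega,
      show (m+d+1+2) + m = 2*m+d+3 by omega]
  have hF0 : Fq (m+d+1) m
      = ((m+2*d+2).choose (d+1) : ℚ) * ((2*m+d+1).choose m : ℚ) * 2^(d+1) := by
    unfold Fq
    rw [show 2*(m+d+1) - m = m+2*d+2 by omega, show (m+d+1) - m = d+1 by omega,
      show (m+d+1) + m = 2*m+d+1 by omega]
  have hF1 : Fq (m+d+1) (m+1)
      = ((m+2*d+1).choose d : ℚ) * ((2*m+d+2).choose (m+1) : ℚ) * 2^d := by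
    unfold Fq
    rw [show 2*(m+d+1) - (m+1) = m+2*d+1 by omega, show (m+d+1) - (m+1) = d by omega,
      show (m+d+1) + (m+1) = 2*m+d+2 by omega]
  -- Nat choose relations
  have n1 : (m+2*d+2) * ((m+2*d+1).choose d) = (m+2*d+2).choose (d+1) * (d+1) := by
    have := Nat.add_one_mul_choose_eq (m+2*d+1) d
    simpa [Nat.succ_eq_add_one, show m+2*d+1+1 = m+2*d+2 by omega] using this
  have n2 : (2*m+d+2) * ((2*m+d+1).choose m) = (2*m+d+2).choose (m+1) * (m+1) := by
    have := Nat.add_one_mul_choose_eq (2*m+d+1) m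
    simpa [Nat.succ_eq_add_one, show 2*m+d+1+1 = 2*m+d+2 by omega] using this
  have n3 : (m+2*d+3) * ((m+2*d+2).choose (d+1)) = (m+2*d+3).choose (d+2) * (d+2) := by
    have := Nat.add_one_mul_choose_eq (m+2*d+2) (d+1)
    simpa [Nat.succ_eq_add_one, show m+2*d+2+1 = m+2*d+3 by omega] using this
  have n4 : (m+2*d+4) * ((m+2*d+3).choose (d+2)) = (m+2*d+4).choose (d+3) * (d+3) := by
    have := Nat.add_one_mul_choose_eq (m+2*d+3) (d+2)
    simpa [Nat.succ_eq_add_one, show m+2*d+3+1 = m+2*d+4 by omega,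
      show d+2+1 = d+3 by omega] using this
  have n5 : ((m+2*d+4).choose (d+3)) * (m+2*d+5) = (m+2*d+5).choose (d+3) * (m+d+2) := by
    have := Nat.choose_mul_succ_eq (m+2*d+4) (d+3)
    simpa [show m+2*d+4+1 = m+2*d+5 by omega, show m+2*d+5 - (d+3) = m+d+2 by omega] using this
  have n6 : ((m+2*d+5).choose (d+3)) * (m+2*d+6) = (m+2*d+6).choose (d+3) * (m+d+3) := by
    have := Nat.choose_mul_succ_eq (m+2*d+5) (d+3)
    simpa [show m+2*d+5+1 = m+2*d+6 by omega, show m+2*d+6 - (d+3) = m+d+3 by omega] using this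
  have n7 : ((2*m+d+1).choose m) * (2*m+d+2) = (2*m+d+2).choose m * (m+d+2) := by
    have := Nat.choose_mul_succ_eq (2*m+d+1) m
    simpa [show 2*m+d+1+1 = 2*m+d+2 by omega, show 2*m+d+2 - m = m+d+2 by omega] using this
  have n8 : ((2*m+d+2).choose m) * (2*m+d+3) = (2*m+d+3).choose m * (m+d+3) := by
    have := Nat.choose_mul_succ_eq (2*m+d+2) m
    simpa [show 2*m+d+2+1 = 2*m+d+3 by omega, show 2*m+d+3 - m = m+d+3 by omega] using this
  -- positivity facts
  have pm1 : ((m:ℚ)+1) ≠ 0 := by positivity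
  have pd1 : ((d:ℚ)+1) ≠ 0 := by positivity
  have pd2 : ((d:ℚ)+2) ≠ 0 := by positivity
  have pd3 : ((d:ℚ)+3) ≠ 0 := by positivity
  have pmd2 : ((m:ℚ)+(d:ℚ)+2) ≠ 0 := by positivity
  have pmd3 : ((m:ℚ)+(d:ℚ)+3) ≠ 0 := by positivity
  have pm2d2 : ((m:ℚ)+2*(d:ℚ)+2) ≠ 0 := by positivity
  -- ℚ versions solved as divisions
  have e1 : ((m+2*d+1).choose d : ℚ)
      = ((m+2*d+2).choose (d+1) : ℚ) * ((d:ℚ)+1) / ((m:ℚ)+2*d+2) := by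
    rw [eq_div_iff pm2d2]
    have h' := congrArg (fun x : ℕ => (x : ℚ)) n1; push_cast at h'; linear_combination h'
  have e2 : ((2*m+d+2).choose (m+1) : ℚ)
      = ((2*m+d+1).choose m : ℚ) * (2*(m:ℚ)+d+2) / ((m:ℚ)+1) := by
    rw [eq_div_iff pm1]
    have h' := congrArg (fun x : ℕ => (x : ℚ)) n2; push_cast at h'; linear_combination -h'
  have e3 : ((m+2*d+3).choose (d+2) : ℚ)
      = ((m+2*d+2).choose (d+1) : ℚ) * ((m:ℚ)+2*d+3) / ((d:ℚ)+2) := by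
    rw [eq_div_iff pd2]
    have h' := congrArg (fun x : ℕ => (x : ℚ)) n3; push_cast at h'; linear_combination -h'
  have e4 : ((m+2*d+4).choose (d+3) : ℚ)
      = ((m+2*d+3).choose (d+2) : ℚ) * ((m:ℚ)+2*d+4) / ((d:ℚ)+3) := by
    rw [eq_div_iff pd3]
    have h' := congrArg (fun x : ℕ => (x : ℚ)) n4; push_cast at h'; linear_combination -h'
  have e5 : ((m+2*d+5).choose (d+3) : ℚ)
      = ((m+2*d+4).choose (d+3) : ℚ) * ((m:ℚ)+2*d+5) / ((m:ℚ)+d+2) := by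
    rw [eq_div_iff pmd2]
    have h' := congrArg (fun x : ℕ => (x : ℚ)) n5; push_cast at h'; linear_combination -h'
  have e6 : ((m+2*d+6).choose (d+3) : ℚ)
      = ((m+2*d+5).choose (d+3) : ℚ) * ((m:ℚ)+2*d+6) / ((m:ℚ)+d+3) := by
    rw [eq_div_iff pmd3]
    have h' := congrArg (fun x : ℕ => (x : ℚ)) n6; push_cast at h'; linear_combination -h'
  have e7 : ((2*m+d+2).choose m : ℚ)
      = ((2*m+d+1).choose m : ℚ) * (2*(m:ℚ)+d+2) / ((m:ℚ)+d+2) := by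
    rw [eq_div_iff pmd2]
    have h' := congrArg (fun x : ℕ => (x : ℚ)) n7; push_cast at h'; linear_combination -h'
  have e8 : ((2*m+d+3).choose m : ℚ)
      = ((2*m+d+2).choose m : ℚ) * (2*(m:ℚ)+d+3) / ((m:ℚ)+d+3) := by
    rw [eq_div_iff pmd3]
    have h' := congrArg (fun x : ℕ => (x : ℚ)) n8; push_cast at h'; linear_combination -h'
  have hG1 : Gq (m+d+1) (m+1)
      = 8*((m:ℚ)+1) * qp ((m:ℚ)+(d:ℚ)+1) ((m:ℚ)+1) * Fq (m+d+1) (m+1)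
        / (((m:ℚ)+(d:ℚ)+2)*((d:ℚ)+1)*((d:ℚ)+2)) := by
    unfold Gq; push_cast; ring
  have hG0 : Gq (m+d+1) m
      = 8*(m:ℚ) * qp ((m:ℚ)+(d:ℚ)+1) (m:ℚ) * Fq (m+d+1) m
        / (((m:ℚ)+(d:ℚ)+2)*((d:ℚ)+2)*((d:ℚ)+3)) := by
    unfold Gq; push_cast; ring
  rw [hF2, hG1, hG0, hF1, hF0]
  rw [e6, e5, e4, e3, e8, e7, e1, e2]
  unfold qp
  push_cast
  field_simp
  ring



/-- Unfolded value `Fq N N = C(2N, N)`. -/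
lemma FqNN (N : ℕ) : Fq N N = ((2*N).choose N : ℚ) := by
  unfold Fq
  rw [show 2*N - N = N by omega, show N - N = 0 by omega, show N + N = 2*N by omega]
  simp

set_option maxHeartbeats 2000000 in
lemma boundary (N : ℕ) :
    Gq N N + ((N:ℚ)+1)*((N:ℚ)+2)^2 * (Fq (N+2) N + Fq (N+2) (N+1) + Fq (N+2) (N+2))
      = 4*(3*(N:ℚ)+2)*(3*(N:ℚ)+4)*(3*(N:ℚ)+6) * Fq N N := by
  have hFa : Fq (N+2) N = ((N+4).choose 2 : ℚ) * ((2*N+2).choose N : ℚ) * 4 := by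
    unfold Fq
    rw [show 2*(N+2) - N = N+4 by omega, show (N+2) - N = 2 by omega,
      show (N+2) + N = 2*N+2 by omega]
    norm_num
  have hFb : Fq (N+2) (N+1) = ((N+3).choose 1 : ℚ) * ((2*N+3).choose (N+1) : ℚ) * 2 := by
    unfold Fq
    rw [show 2*(N+2) - (N+1) = N+3 by omega, show (N+2) - (N+1) = 1 by omega,
      show (N+2) + (N+1) = 2*N+3 by omega]
    norm_num
  have hFc : Fq (N+2) (N+2) = ((2*N+4).choose (N+2) : ℚ) := by
    unfold Fq
    rw [show 2*(N+2) - (N+2) = N+2 by omega, show (N+2) - (N+2) = 0 by omega,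
      show (N+2) + (N+2) = 2*N+4 by omega]
    simp
  have hG : Gq N N = 8*(N:ℚ) * qp (N:ℚ) (N:ℚ) * ((2*N).choose N : ℚ) / (((N:ℚ)+1)*2) := by
    unfold Gq
    rw [FqNN]
    push_cast
    ring
  have pN1 : ((N:ℚ)+1) ≠ 0 := by positivity
  have pN2 : ((N:ℚ)+2) ≠ 0 := by positivity
  -- choose relations
  have b1 : (2*N).choose N * (2*N+1) = (2*N+1).choose N * (N+1) := by
    have := Nat.choose_mul_succ_eq (2*N) N
    simpa [show 2*N+1 - N = N+1 by omega] using this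
  have b2 : (2*N+1).choose N * (2*N+2) = (2*N+2).choose N * (N+2) := by
    have := Nat.choose_mul_succ_eq (2*N+1) N
    simpa [show 2*N+1+1 = 2*N+2 by omega, show 2*N+2 - N = N+2 by omega] using this
  have b3 : (2*N+2) * ((2*N+1).choose N) = (2*N+2).choose (N+1) * (N+1) := by
    have := Nat.add_one_mul_choose_eq (2*N+1) N
    simpa [Nat.succ_eq_add_one, show 2*N+1+1 = 2*N+2 by omega] using this
  have b4 : (2*N+2).choose (N+1) * (2*N+3) = (2*N+3).choose (N+1) * (N+2) := by
    have := Nat.choose_mul_succ_eq (2*N+2) (N+1)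
    simpa [show 2*N+2+1 = 2*N+3 by omega, show 2*N+3 - (N+1) = N+2 by omega] using this
  have b5 : (2*N+4) * ((2*N+3).choose (N+1)) = (2*N+4).choose (N+2) * (N+2) := by
    have := Nat.add_one_mul_choose_eq (2*N+3) (N+1)
    simpa [Nat.succ_eq_add_one, show 2*N+3+1 = 2*N+4 by omega,
      show N+1+1 = N+2 by omega] using this
  have b6 : (N+4) * ((N+3).choose 1) = (N+4).choose 2 * 2 := by
    have := Nat.add_one_mul_choose_eq (N+3) 1
    simpa [Nat.succ_eq_add_one, show N+3+1 = N+4 by omega] using this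
  -- rational division forms
  have f1 : ((2*N+1).choose N : ℚ) = ((2*N).choose N : ℚ) * (2*(N:ℚ)+1) / ((N:ℚ)+1) := by
    rw [eq_div_iff pN1]
    have h' := congrArg (fun x : ℕ => (x : ℚ)) b1; push_cast at h'; linear_combination -h'
  have f2 : ((2*N+2).choose N : ℚ) = ((2*N+1).choose N : ℚ) * (2*(N:ℚ)+2) / ((N:ℚ)+2) := by
    rw [eq_div_iff pN2]
    have h' := congrArg (fun x : ℕ => (x : ℚ)) b2; push_cast at h'; linear_combination -h'
  have f3 : ((2*N+2).choose (N+1) : ℚ) = ((2*N+1).choose N : ℚ) * (2*(N:ℚ)+2) / ((N:ℚ)+1) := by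
    rw [eq_div_iff pN1]
    have h' := congrArg (fun x : ℕ => (x : ℚ)) b3; push_cast at h'; linear_combination -h'
  have f4 : ((2*N+3).choose (N+1) : ℚ) = ((2*N+2).choose (N+1) : ℚ) * (2*(N:ℚ)+3) / ((N:ℚ)+2) := by
    rw [eq_div_iff pN2]
    have h' := congrArg (fun x : ℕ => (x : ℚ)) b4; push_cast at h'; linear_combination -h'
  have f5 : ((2*N+4).choose (N+2) : ℚ) = ((2*N+3).choose (N+1) : ℚ) * (2*(N:ℚ)+4) / ((N:ℚ)+2) := by
    rw [eq_div_iff pN2]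
    have h' := congrArg (fun x : ℕ => (x : ℚ)) b5; push_cast at h'; linear_combination -h'
  have f6 : ((N+4).choose 2 : ℚ) = ((N:ℚ)+4) * ((N:ℚ)+3) / 2 := by
    rw [eq_div_iff (two_ne_zero)]
    have h' := congrArg (fun x : ℕ => (x : ℚ)) b6
    push_cast [Nat.choose_one_right] at h'
    linear_combination -h'
  have f7 : ((N+3).choose 1 : ℚ) = (N:ℚ)+3 := by
    rw [Nat.choose_one_right]; push_cast; ring
  rw [hG, hFa, hFb, hFc, FqNN, f5, f4, f3, f2, f1, f6, f7]
  unfold qp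
  push_cast
  field_simp
  ring

/-- The sum `S N = W N 2 (-1)`. -/
noncomputable def S (N : ℕ) : ℚ := ∑ m ∈ Finset.range (N+1), Fq N m

lemma Srec (N : ℕ) :
    ((N:ℚ)+1)*((N:ℚ)+2)^2 * S (N+2) = 4*(3*(N:ℚ)+2)*(3*(N:ℚ)+4)*(3*(N:ℚ)+6) * S N := by
  have hG0 : Gq N 0 = 0 := by unfold Gq; simp
  have hsum : ∑ m ∈ Finset.range N, (((N:ℚ)+1)*((N:ℚ)+2)^2 * Fq (N+2) m)
      = ∑ m ∈ Finset.range N,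
          (4*(3*(N:ℚ)+2)*(3*(N:ℚ)+4)*(3*(N:ℚ)+6) * Fq N m + (Gq N (m+1) - Gq N m)) :=
    Finset.sum_congr rfl fun m hm => cert N m (Finset.mem_range.mp hm)
  have htel : ∑ m ∈ Finset.range N, (Gq N (m+1) - Gq N m) = Gq N N - Gq N 0 :=
    Finset.sum_range_sub (fun m => Gq N m) N
  have key : ((N:ℚ)+1)*((N:ℚ)+2)^2 * ∑ m ∈ Finset.range N, Fq (N+2) m
      = 4*(3*(N:ℚ)+2)*(3*(N:ℚ)+4)*(3*(N:ℚ)+6) * (∑ m ∈ Finset.range N, Fq N m) + Gq N N := by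
    rw [Finset.mul_sum, hsum, Finset.sum_add_distrib, htel, hG0, ← Finset.mul_sum]
    ring
  unfold S
  rw [show N+2+1 = (N+2)+1 from rfl, Finset.sum_range_succ, Finset.sum_range_succ,
    Finset.sum_range_succ, Finset.sum_range_succ (f := Fq N)]
  have hb := boundary N
  linear_combination key + hb

lemma W_eq_S (N : ℕ) : W N (2:ℚ) (-1) = S N := by
  unfold W S Fq
  refine Finset.sum_congr rfl fun m _ => ?_
  simp

/-- The right-hand side. -/
noncomputable def Rt (N : ℕ) : ℚ :=
  4 ^ N * ((1 / (N.factorial : ℚ)) * ∏ j ∈ Finset.range N, ((3 * N : ℚ) / 2 - j))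

lemma prod_shift (K : ℕ) (c : ℚ) :
    ∏ j ∈ Finset.range (K+3), (c - (j:ℚ))
      = c*(c-1)*(c-2) * ∏ j ∈ Finset.range K, (c - 3 - (j:ℚ)) := by
  rw [Finset.prod_range_succ', Finset.prod_range_succ', Finset.prod_range_succ']
  rw [Finset.prod_congr rfl
    (fun j _ => by push_cast; ring :
      ∀ j ∈ Finset.range K, (c - ((j+1+1+1 : ℕ):ℚ)) = c - 3 - (j:ℚ))]
  push_cast
  ring

lemma Rrec (N : ℕ) (h : 0 < N) :
    ((N:ℚ)+1)*((N:ℚ)+2)^2 * Rt (N+2) = 4*(3*(N:ℚ)+2)*(3*(N:ℚ)+4)*(3*(N:ℚ)+6) * Rt N := by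
  obtain ⟨K, rfl⟩ : ∃ K, N = K+1 := ⟨N-1, by omega⟩
  unfold Rt
  have h2 : ∏ j ∈ Finset.range (K+1+2), ((3 * ((K+1+2 : ℕ) : ℚ)) / 2 - (j:ℚ))
      = ∏ j ∈ Finset.range (K+3), ((3*(K:ℚ)+9)/2 - (j:ℚ)) := by
    apply Finset.prod_congr (by norm_num)
    intro j _
    push_cast
    ring
  have h1 : ∏ j ∈ Finset.range (K+1), ((3 * ((K+1 : ℕ) : ℚ)) / 2 - (j:ℚ))
      = (∏ j ∈ Finset.range K, ((3*(K:ℚ)+9)/2 - 3 - (j:ℚ))) * (((K:ℚ)+3)/2) := by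
    rw [Finset.prod_range_succ]
    refine congrArg₂ (· * ·) (Finset.prod_congr rfl fun j _ => by push_cast; ring)
      (by push_cast; ring)
  rw [h2, prod_shift, h1]
  have hf : (((K+1+2).factorial : ℚ)) = ((K:ℚ)+3)*((K:ℚ)+2)*((K+1).factorial : ℚ) := by
    rw [show K+1+2 = (K+2)+1 from rfl, Nat.factorial_succ, show K+2 = (K+1)+1 from rfl,
      Nat.factorial_succ]
    push_cast; ring
  rw [hf]
  have hfne : ((K+1).factorial : ℚ) ≠ 0 := Nat.cast_ne_zero.mpr (Nat.factorial_ne_zero _)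
  push_cast
  field_simp
  ring

lemma main (M : ℕ) (hM : 0 < M) : S M = Rt M := by
  induction M using Nat.strong_induction_on with
  | _ M ih =>
    match M, hM with
    | 1, _ =>
      unfold S Rt Fq
      simp [Finset.sum_range_succ, Finset.prod_range_succ, Nat.factorial]
      norm_num [Nat.choose]
    | 2, _ =>
      unfold S Rt Fq
      simp [Finset.sum_range_succ, Finset.prod_range_succ, Nat.factorial]
      norm_num [Nat.choose]
    | (K+3), _ =>
      have hK : 0 < K+1 := Nat.succ_pos _
      have hih : S (K+1) = Rt (K+1) := ih (K+1) (by omega) hK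
      have r1 := Srec (K+1)
      have r2 := Rrec (K+1) hK
      rw [show K+1+2 = K+3 from rfl] at r1 r2
      have ha : (((K+1 : ℕ):ℚ)+1)*(((K+1 : ℕ):ℚ)+2)^2 ≠ 0 := by positivity
      have : (((K+1 : ℕ):ℚ)+1)*(((K+1 : ℕ):ℚ)+2)^2 * S (K+3)
          = (((K+1 : ℕ):ℚ)+1)*(((K+1 : ℕ):ℚ)+2)^2 * Rt (K+3) := by
        rw [r1, r2, hih]
      exact mul_left_cancel₀ ha this

end WAux

/-- For every positive integer `N`, one has
`W_N(2, −1) = 4^N · binom(3N/2, N)` in `ℚ`, where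
`binom(3N/2, N) = (1/N!) · Π_{j=0}^{N−1} (3N/2 − j)`. -/
theorem W_two_neg_one (N : ℕ) (hN : 0 < N) :
    W N (2 : ℚ) (-1) =
      4 ^ N * ((1 / (N.factorial : ℚ)) * ∏ j ∈ Finset.range N, ((3 * N : ℚ) / 2 - j)) := by
  have h1 := WAux.W_eq_S N
  have h2 := WAux.main N hN
  rw [h1, h2]
  rfl
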